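/- For any polynomial $R(z) = 1 + z + \sum_{j=2}^s a_j z^j$ with real coefficients satisfying $|R(x)| \le 1$ for all $x \in [-h, 0]$, one has $h \le 2s^2$. -/

import Mathlib

open Polynomial Real

lemma aux_T_natDegree_le : ∀ n : ℕ, (Chebyshev.T ℝ (n : ℤ)).natDegree ≤ n
  | 0 => by simp [Chebyshev.T_zero]
  | 1 => by simp [Chebyshev.T_one]
  | (n+2) => by
    have h1 := aux_T_natDegree_le n
    have h2 := aux_T_natDegree_le (n+1)
    have : ((n:ℤ) + 2) = ((n:ℕ) : ℤ) + 2 := by push_cast; ring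
    rw [show ((n+2 : ℕ) : ℤ) = (n : ℤ) + 2 by push_cast; ring, Chebyshev.T_add_two]
    refine (natDegree_sub_le _ _).trans ?_
    simp only [max_le_iff]
    constructor
    · refine (natDegree_mul_le).trans ?_
      have : (2 * X : ℝ[X]).natDegree ≤ 1 := by
        refine natDegree_mul_le.trans ?_; simp
      have h2' : (Chebyshev.T ℝ ((n:ℤ)+1)).natDegree ≤ n + 1 := by
        rw [show ((n:ℤ)+1) = ((n+1 : ℕ) : ℤ) by push_cast; ring]; exact h2
      omega
    · omega

lemma aux_U_eval_one : ∀ n : ℕ, (Chebyshev.U ℝ (n : ℤ)).eval 1 = n + 1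
  | 0 => by simp [Chebyshev.U_zero]
  | 1 => by norm_num [Chebyshev.U_one]
  | (n+2) => by
    have h1 := aux_U_eval_one n
    have h2 := aux_U_eval_one (n+1)
    rw [show ((n+2 : ℕ) : ℤ) = (n : ℤ) + 2 by push_cast; ring, Chebyshev.U_add_two]
    rw [show (n:ℤ)+1 = ((n+1 : ℕ) : ℤ) by push_cast; ring]
    simp only [eval_sub, eval_mul, eval_ofNat, eval_X, h1, h2]
    push_cast; ring

lemma aux_cos_nat_mul_pi (k : ℕ) : Real.cos (k * Real.pi) = (-1)^k := by
  simpa using Real.cos_nat_mul_pi_sub 0 k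

lemma aux_deriv_nonneg (p : ℝ[X]) (h0 : p.eval 0 = 0) (hp : ∀ ε : ℝ, 0 < ε → 0 ≤ p.eval ε) :
    0 ≤ (Polynomial.derivative p).eval 0 := by
  have hd : HasDerivWithinAt (fun x => p.eval x) ((Polynomial.derivative p).eval 0) (Set.Ioi 0) 0 :=
    (p.hasDerivAt 0).hasDerivWithinAt
  rw [hasDerivWithinAt_iff_tendsto_slope,
    Set.diff_singleton_eq_self (by simp : (0:ℝ) ∉ Set.Ioi 0)] at hd
  refine ge_of_tendsto hd ?_
  filter_upwards [self_mem_nhdsWithin] with x hx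
  have hx : (0:ℝ) < x := hx
  rw [slope_def_field]
  simp only [h0, sub_zero]
  exact div_nonneg (hp x hx) hx.le

open Polynomial Real

lemma aux_compare (s : ℕ) (hs : 1 ≤ s) (Q : ℝ[X]) (hdeg : Q.natDegree ≤ s)
    (hb : ∀ t ∈ Set.Icc (-1:ℝ) 1, |Q.eval t| ≤ 1) {x : ℝ} (hx : 1 < x) :
    Q.eval x ≤ (Polynomial.Chebyshev.T ℝ (s : ℤ)).eval x := by
  classical
  set N : Finset ℕ := Finset.range (s+1) with hN
  set v : ℕ → ℝ := fun k => Real.cos (k * π / s) with hv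
  have hspos : (0:ℝ) < s := by exact_mod_cast hs
  have hπ := Real.pi_pos
  have harg : ∀ k, k ≤ s → (k:ℝ) * π / s ∈ Set.Icc 0 π := by
    intro k hk
    constructor
    · positivity
    · rw [div_le_iff₀ hspos]
      have : (k:ℝ) ≤ s := by exact_mod_cast hk
      nlinarith
  have hinj : Set.InjOn v ↑N := by
    intro j hj k hk hjk
    have hj' : j ≤ s := by simpa [hN, Nat.lt_succ_iff] using hj
    have hk' : k ≤ s := by simpa [hN, Nat.lt_succ_iff] using hk
    have h2 := Real.injOn_cos (harg j hj') (harg k hk') hjk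
    have hπs : π / (s:ℝ) ≠ 0 := by positivity
    have h3 : (j:ℝ) * (π / s) = k * (π / s) := by
      rw [← mul_div_assoc, ← mul_div_assoc]; exact h2
    have : (j:ℝ) = k := mul_right_cancel₀ hπs h3
    exact_mod_cast this
  have hmono : ∀ j k : ℕ, k ≤ s → j < k → v k < v j := by
    intro j k hk hjk
    apply Real.cos_lt_cos_of_nonneg_of_le_pi
    · positivity
    · exact (harg k hk).2
    · have hj : (j:ℝ) < k := by exact_mod_cast hjk
      rw [div_lt_div_iff_of_pos_right hspos]
      nlinarith
  -- node values of T
  have hTnode : ∀ k, (Polynomial.Chebyshev.T ℝ (s : ℤ)).eval (v k) = (-1:ℝ)^k := by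
    intro k
    have h1 : (((s:ℤ)):ℝ) * ((k:ℝ) * π / s) = (k:ℝ) * π := by
      field_simp
      push_cast; ring
    rw [hv]
    simp only []
    rw [Polynomial.Chebyshev.T_real_cos, h1, aux_cos_nat_mul_pi]
  have hvle : ∀ k, v k ≤ 1 := fun k => Real.cos_le_one _
  have hvmem : ∀ k, v k ∈ Set.Icc (-1:ℝ) 1 := fun k => ⟨Real.neg_one_le_cos _, hvle k⟩
  -- sign of basis polynomials at x
  have hsign : ∀ k ∈ N, 0 ≤ (-1:ℝ)^k * (Lagrange.basis N v k).eval x := by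
    intro k hk
    have hk' : k ≤ s := by simpa [hN, Nat.lt_succ_iff] using hk
    set c : ℕ → ℝ := fun j => (v k - v j)⁻¹ * (x - v j) with hc
    have hev : (Lagrange.basis N v k).eval x = ∏ j ∈ N.erase k, c j := by
      rw [Lagrange.basis, eval_prod]
      refine Finset.prod_congr rfl fun j hj => ?_
      simp [Lagrange.basisDivisor, hc]
    have hsplit : N.erase k = Finset.range k ∪ Finset.Ioc k s := by
      ext j
      simp only [hN, Finset.mem_erase, Finset.mem_range, Finset.mem_union, Finset.mem_Ioc,
        Nat.lt_succ_iff]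
      omega
    have hdisj : Disjoint (Finset.range k) (Finset.Ioc k s) := by
      rw [Finset.disjoint_left]
      intro j hj hj'
      simp only [Finset.mem_range] at hj
      simp only [Finset.mem_Ioc] at hj'
      omega
    rw [hev, hsplit, Finset.prod_union hdisj]
    have h1 : ∏ j ∈ Finset.range k, (-(c j)) = (-1:ℝ)^k * ∏ j ∈ Finset.range k, c j := by
      calc ∏ j ∈ Finset.range k, (-(c j)) = ∏ j ∈ Finset.range k, ((-1) * c j) := by
            refine Finset.prod_congr rfl fun j _ => ?_; ring
        _ = (∏ _j ∈ Finset.range k, (-1:ℝ)) * ∏ j ∈ Finset.range k, c j :=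
            Finset.prod_mul_distrib
        _ = (-1:ℝ)^k * ∏ j ∈ Finset.range k, c j := by
            rw [Finset.prod_const, Finset.card_range]
    have h2 : 0 < ∏ j ∈ Finset.range k, (-(c j)) := by
      apply Finset.prod_pos
      intro j hj
      have hj' : j < k := Finset.mem_range.mp hj
      have hvv : v k < v j := hmono j k hk' hj'
      have hxj : 0 < x - v j := by have := (hvle j).trans_lt hx; linarith
      have : c j < 0 := by
        show (v k - v j)⁻¹ * (x - v j) < 0
        exact mul_neg_of_neg_of_pos (inv_neg''.mpr (by linarith)) hxj
      linarith
    have h3 : 0 < ∏ j ∈ Finset.Ioc k s, c j := by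
      apply Finset.prod_pos
      intro j hj
      simp only [Finset.mem_Ioc] at hj
      have hvv : v j < v k := hmono k j hj.2 hj.1
      have hxj : 0 < x - v j := by have := (hvle j).trans_lt hx; linarith
      show 0 < (v k - v j)⁻¹ * (x - v j)
      exact mul_pos (inv_pos.mpr (by linarith)) hxj
    calc (0:ℝ) ≤ (∏ j ∈ Finset.range k, (-(c j))) * ∏ j ∈ Finset.Ioc k s, c j :=
          le_of_lt (mul_pos h2 h3)
      _ = (-1:ℝ)^k * ((∏ j ∈ Finset.range k, c j) * ∏ j ∈ Finset.Ioc k s, c j) := by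
          rw [h1]; ring
  -- interpolation identities
  have hcard : (N.card : WithBot ℕ) = ((s + 1 : ℕ) : WithBot ℕ) := by
    simp [hN]
  have hQdeg : Q.degree < N.card := by
    rw [hcard]
    exact lt_of_le_of_lt degree_le_natDegree (by exact_mod_cast Nat.lt_succ_of_le hdeg)
  have hTdeg : (Polynomial.Chebyshev.T ℝ (s:ℤ)).degree < N.card := by
    rw [hcard]
    exact lt_of_le_of_lt degree_le_natDegree
      (by exact_mod_cast Nat.lt_succ_of_le (aux_T_natDegree_le s))
  have hQi := Lagrange.eq_interpolate hinj hQdeg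
  have hTi := Lagrange.eq_interpolate hinj hTdeg
  have hQev : Q.eval x = ∑ k ∈ N, Q.eval (v k) * (Lagrange.basis N v k).eval x := by
    conv_lhs => rw [hQi]
    rw [Lagrange.interpolate_apply, eval_finset_sum]
    exact Finset.sum_congr rfl fun k _ => by rw [eval_mul, eval_C]
  have hTev : (Polynomial.Chebyshev.T ℝ (s:ℤ)).eval x
      = ∑ k ∈ N, (-1:ℝ)^k * (Lagrange.basis N v k).eval x := by
    conv_lhs => rw [hTi]
    rw [Lagrange.interpolate_apply, eval_finset_sum]
    exact Finset.sum_congr rfl fun k _ => by rw [eval_mul, eval_C, hTnode]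
  rw [hQev, hTev]
  refine Finset.sum_le_sum fun k hk => ?_
  have hsk := hsign k hk
  have habs : |(Lagrange.basis N v k).eval x| = (-1:ℝ)^k * (Lagrange.basis N v k).eval x := by
    rw [← abs_of_nonneg hsk, abs_mul, abs_pow, abs_neg, abs_one, one_pow, one_mul]
  calc Q.eval (v k) * (Lagrange.basis N v k).eval x
      ≤ |Q.eval (v k) * (Lagrange.basis N v k).eval x| := le_abs_self _
    _ = |Q.eval (v k)| * |(Lagrange.basis N v k).eval x| := abs_mul _ _
    _ ≤ 1 * |(Lagrange.basis N v k).eval x| :=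
        mul_le_mul_of_nonneg_right (hb _ (hvmem k)) (abs_nonneg _)
    _ = (-1:ℝ)^k * (Lagrange.basis N v k).eval x := by rw [one_mul, habs]

open Polynomial Real

theorem stmt_16 (s : ℕ) (hs : 1 ≤ s) (h : ℝ) (hh : 0 < h) (a : ℕ → ℝ)
    (hstab : ∀ x ∈ Set.Icc (-h) (0 : ℝ),
      |1 + x + ∑ j ∈ Finset.Icc 2 s, a j * x ^ j| ≤ 1) :
    h ≤ 2 * s ^ 2 := by
  classical
  set P : ℝ[X] := C 1 + X + ∑ j ∈ Finset.Icc 2 s, C (a j) * X ^ j with hP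
  have hPeval : ∀ y : ℝ, P.eval y = 1 + y + ∑ j ∈ Finset.Icc 2 s, a j * y ^ j := by
    intro y
    simp [hP, eval_finset_sum]
  set q : ℝ[X] := C (h/2) * X - C (h/2) with hq
  set Q : ℝ[X] := P.comp q with hQ
  have hqeval : ∀ t : ℝ, q.eval t = h/2 * (t - 1) := by
    intro t; simp [hq]; ring
  have hQeval : ∀ t : ℝ, Q.eval t = P.eval (h/2 * (t - 1)) := by
    intro t; rw [hQ, eval_comp, hqeval]
  -- degree bound
  have hPdeg : P.natDegree ≤ s := by
    rw [hP]
    refine (natDegree_add_le _ _).trans (max_le ?_ ?_)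
    · exact (natDegree_add_le _ _).trans (max_le (by simp) (by simpa using hs))
    · refine natDegree_sum_le_of_forall_le _ _ fun j hj => ?_
      refine (natDegree_C_mul_le _ _).trans ?_
      simpa using (Finset.mem_Icc.mp hj).2
  have hqdeg : q.natDegree ≤ 1 := by
    rw [hq]
    refine (natDegree_sub_le _ _).trans (max_le ?_ ?_)
    · exact (natDegree_C_mul_le _ _).trans (by simp)
    · simp
  have hQdeg : Q.natDegree ≤ s := by
    refine (natDegree_comp_le).trans ?_
    calc P.natDegree * q.natDegree ≤ s * 1 := Nat.mul_le_mul hPdeg hqdeg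
      _ = s := by ring
  -- boundedness on [-1,1]
  have hQb : ∀ t ∈ Set.Icc (-1:ℝ) 1, |Q.eval t| ≤ 1 := by
    intro t ht
    rw [hQeval, hPeval]
    apply hstab
    constructor
    · nlinarith [ht.1, ht.2]
    · nlinarith [ht.1, ht.2]
  -- comparison
  have hcomp : ∀ x : ℝ, 1 < x → Q.eval x ≤ (Polynomial.Chebyshev.T ℝ (s:ℤ)).eval x :=
    fun x hx => aux_compare s hs Q hQdeg hQb hx
  -- the difference polynomial
  set D : ℝ[X] := (Polynomial.Chebyshev.T ℝ (s:ℤ) - Q).comp (X + C 1) with hD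
  have hT1 : (Polynomial.Chebyshev.T ℝ (s:ℤ)).eval 1 = 1 := by
    have := Polynomial.Chebyshev.T_real_cos 0 (s:ℤ)
    simpa using this
  have hQ1 : Q.eval 1 = 1 := by
    rw [hQeval, hPeval]
    have : ∑ j ∈ Finset.Icc 2 s, a j * (h/2 * ((1:ℝ) - 1)) ^ j = 0 := by
      refine Finset.sum_eq_zero fun j hj => ?_
      have : 2 ≤ j := (Finset.mem_Icc.mp hj).1
      rw [show h/2 * ((1:ℝ)-1) = 0 by ring, zero_pow (by omega)]
      ring
    rw [this]; ring
  have hD0 : D.eval 0 = 0 := by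
    rw [hD, eval_comp]
    simp [hT1, hQ1]
  have hDpos : ∀ ε : ℝ, 0 < ε → 0 ≤ D.eval ε := by
    intro ε hε
    rw [hD, eval_comp]
    simp only [eval_add, eval_X, eval_C, eval_sub]
    have := hcomp (ε + 1) (by linarith)
    linarith
  have hder := aux_deriv_nonneg D hD0 hDpos
  -- compute the derivative
  have hDder : (Polynomial.derivative D).eval 0
      = (Polynomial.derivative (Polynomial.Chebyshev.T ℝ (s:ℤ))).eval 1
        - (Polynomial.derivative Q).eval 1 := by
    rw [hD, derivative_comp]
    simp [eval_comp]
  have hTder : (Polynomial.derivative (Polynomial.Chebyshev.T ℝ (s:ℤ))).eval 1 = (s:ℝ)^2 := by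
    rw [Polynomial.Chebyshev.T_derivative_eq_U]
    have hcast : ((s:ℤ) - 1) = ((s - 1 : ℕ) : ℤ) := by
      have : 1 ≤ s := hs; push_cast [this]; ring
    rw [hcast]
    simp only [eval_mul, aux_U_eval_one]
    have : ((s - 1 : ℕ) : ℝ) = (s:ℝ) - 1 := by push_cast [hs]; ring
    rw [this, Polynomial.eval_intCast]
    push_cast
    ring
  have hPc1 : P.coeff 1 = 1 := by
    rw [hP]
    simp only [coeff_add, coeff_C, coeff_X_one, finset_sum_coeff, coeff_C_mul, coeff_X_pow]
    rw [Finset.sum_eq_zero]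
    · norm_num
    · intro j hj
      have : 2 ≤ j := (Finset.mem_Icc.mp hj).1
      rw [if_neg (by omega)]
      ring
  have hQder : (Polynomial.derivative Q).eval 1 = h / 2 := by
    rw [hQ, derivative_comp]
    have hq' : Polynomial.derivative q = C (h/2) := by
      rw [hq]; simp
    rw [hq']
    rw [eval_mul, eval_C, eval_comp]
    have : q.eval 1 = 0 := by rw [hqeval]; ring
    rw [this]
    have : (Polynomial.derivative P).eval 0 = P.coeff 1 := by
      rw [← coeff_zero_eq_eval_zero, coeff_derivative]
      norm_num
    rw [this, hPc1]
    ring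
  rw [hDder, hTder, hQder] at hder
  nlinarith
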